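/- arXiv:2407.10894 — 2 statements merged into one kernel-verified Lean document; each statement's English description precedes it below -/
import Mathlib

section
/- For every s ∈ ℂ, the point (0, 0) ∈ ℂ × ℂ is not preperiodic under the map Φ_s : ℂ × ℂ → ℂ × ℂ defined by Φ_s(x, y) = (x² + s, y² + s + 10). -/
/-- A point `x` is preperiodic under a self-map `f` if there exist
integers `0 ≤ m < n` with `f^[m] x = f^[n] x`. -/
def Preperiodic {α : Type*} (f : α → α) (x : α) : Prop :=
  ∃ m n : ℕ, m < n ∧ f^[m] x = f^[n] x

lemma qmap_abs_ge (c : ℂ) (hc : 2 < ‖c‖) :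
    ∀ k, ‖c‖ ≤ ‖(fun z : ℂ => z ^ 2 + c)^[k + 1] 0‖ := by
  intro k
  induction k with
  | zero => simp
  | succ k ih =>
    rw [Function.iterate_succ_apply']
    set z := (fun z : ℂ => z ^ 2 + c)^[k + 1] 0 with hz
    have h1 : ‖z ^ 2‖ ≤ ‖z ^ 2 + c‖ + ‖c‖ := by
      calc ‖z ^ 2‖ = ‖(z ^ 2 + c) + (-c)‖ := by ring_nf
        _ ≤ ‖z ^ 2 + c‖ + ‖-c‖ := norm_add_le _ _
        _ = ‖z ^ 2 + c‖ + ‖c‖ := by rw [norm_neg]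
    have h2 : ‖z ^ 2‖ = ‖z‖ ^ 2 := by
      simp [map_pow]
    nlinarith [norm_nonneg z, norm_nonneg c]

lemma qmap_strict (c : ℂ) (hc : 2 < ‖c‖) :
    StrictMono (fun k => ‖(fun z : ℂ => z ^ 2 + c)^[k] 0‖) := by
  apply strictMono_nat_of_lt_succ
  intro k
  cases k with
  | zero => simp; rintro rfl; simp at hc; linarith
  | succ k =>
    have ih := qmap_abs_ge c hc k
    rw [Function.iterate_succ_apply' _ (k + 1)]
    set z := (fun z : ℂ => z ^ 2 + c)^[k + 1] 0 with hz
    have h1 : ‖z ^ 2‖ ≤ ‖z ^ 2 + c‖ + ‖c‖ := by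
      calc ‖z ^ 2‖ = ‖(z ^ 2 + c) + (-c)‖ := by ring_nf
        _ ≤ ‖z ^ 2 + c‖ + ‖-c‖ := norm_add_le _ _
        _ = ‖z ^ 2 + c‖ + ‖c‖ := by rw [norm_neg]
    have h2 : ‖z ^ 2‖ = ‖z‖ ^ 2 := by simp [map_pow]
    nlinarith

lemma qmap_abs_le (c : ℂ) (hpre : Preperiodic (fun z : ℂ => z ^ 2 + c) 0) :
    ‖c‖ ≤ 2 := by
  by_contra h
  push_neg at h
  obtain ⟨m, n, hmn, heq⟩ := hpre
  have := qmap_strict c h hmn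
  simp only [heq] at this
  exact lt_irrefl _ this

theorem not_preperiodic_example (s : ℂ) :
    ¬ Preperiodic (fun p : ℂ × ℂ => (p.1 ^ 2 + s, p.2 ^ 2 + s + 10)) (0, 0) := by
  rintro ⟨m, n, hmn, heq⟩
  have key : ∀ k, (fun p : ℂ × ℂ => (p.1 ^ 2 + s, p.2 ^ 2 + s + 10))^[k] (0, 0) =
      ((fun z : ℂ => z ^ 2 + s)^[k] 0, (fun z : ℂ => z ^ 2 + (s + 10))^[k] 0) := by
    intro k
    induction k with
    | zero => simp
    | succ k ih =>
      rw [Function.iterate_succ_apply', Function.iterate_succ_apply',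
        Function.iterate_succ_apply', ih]
      simp [add_assoc]
  rw [key m, key n, Prod.ext_iff] at heq
  have h1 : ‖s‖ ≤ 2 := qmap_abs_le s ⟨m, n, hmn, heq.1⟩
  have h2 : ‖s + 10‖ ≤ 2 := qmap_abs_le (s + 10) ⟨m, n, hmn, heq.2⟩
  have h3 : (10 : ℝ) = ‖(s + 10) - s‖ := by norm_num
  have h4 : ‖(s + 10) - s‖ ≤ ‖s + 10‖ + ‖s‖ :=
    norm_sub_le _ _
  linarith
end

section
/- For every s ∈ ℂ, the sequence n ↦ 2^{−n} · log(max(|f_s^n(0)|, |f_{s+10}^n(0)|, 1)) converges to a strictly positive limit. Equivalently, G(s, 0, 0) > 0 for all s ∈ ℂ, where G(s, x, y) = max{G_s(x), G_{s+10}(y)}. -/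
open Filter

private noncomputable def gpUseq (c : ℂ) (n : ℕ) : ℝ :=
  Real.log (max (‖(fun w : ℂ => w ^ 2 + c)^[n] 0‖) 1)

private noncomputable def gpBseq (c : ℂ) (n : ℕ) : ℝ := ((2 : ℝ) ^ n)⁻¹ * gpUseq c n

private lemma gp_rev_triangle (z c : ℂ) :
    ‖z‖ ^ 2 - ‖c‖ ≤ ‖z ^ 2 + c‖ := by
  have h := norm_add_le (z ^ 2 + c) (-c)
  rw [add_neg_cancel_right] at h
  have haz : ‖z ^ 2‖ = ‖z‖ ^ 2 := by rw [norm_pow]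
  have hneg : ‖-c‖ = ‖c‖ := norm_neg _
  rw [haz, hneg] at h
  linarith

private lemma gpUseq_succ_bound (c : ℂ) (n : ℕ) :
    |gpUseq c (n + 1) - 2 * gpUseq c n| ≤ Real.log (1 + ‖c‖) := by
  set z : ℂ := (fun w : ℂ => w ^ 2 + c)^[n] 0 with hz
  have hiter : (fun w : ℂ => w ^ 2 + c)^[n + 1] 0 = z ^ 2 + c := by
    rw [Function.iterate_succ_apply']
  set a : ℝ := ‖z‖ with ha
  set m : ℝ := max a 1 with hm
  have ha0 : 0 ≤ a := norm_nonneg z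
  have hm1 : (1 : ℝ) ≤ m := le_max_right _ _
  have hc0 : 0 ≤ ‖c‖ := norm_nonneg c
  set M : ℝ := max (‖z ^ 2 + c‖) 1 with hM
  have hM1 : (1 : ℝ) ≤ M := le_max_right _ _
  have haz : ‖z ^ 2‖ = a ^ 2 := by rw [norm_pow]
  have ham : a ≤ m := le_max_left _ _
  have h2 : a ^ 2 ≤ m ^ 2 := by nlinarith
  have h3 : (1 : ℝ) ≤ m ^ 2 := by nlinarith
  -- upper bound : M ≤ (1+|c|) * m^2
  have hup : M ≤ (1 + ‖c‖) * m ^ 2 := by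
    apply max_le
    · have h1 : ‖z ^ 2 + c‖ ≤ a ^ 2 + ‖c‖ :=
        haz ▸ norm_add_le _ _
      nlinarith
    · nlinarith
  -- lower bound : m^2 ≤ (1+|c|) * M
  have hlow : m ^ 2 ≤ (1 + ‖c‖) * M := by
    rcases le_or_gt (a ^ 2) (1 + ‖c‖) with h | h
    · have hm2 : m ^ 2 ≤ max (a ^ 2) 1 := by
        rcases le_total a 1 with h' | h'
        · have : m = 1 := max_eq_right h'
          rw [this]; simp [le_max_right]
        · have : m = a := max_eq_left h'
          rw [this]; exact le_max_left _ _
      have : max (a ^ 2) 1 ≤ 1 + ‖c‖ :=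
        max_le h (by linarith)
      nlinarith
    · have ha1 : 1 < a := by nlinarith
      have hma : m = a := max_eq_left ha1.le
      have hrev := gp_rev_triangle z c
      rw [← ha] at hrev
      have hMge : a ^ 2 - ‖c‖ ≤ M := hrev.trans (le_max_left _ _)
      nlinarith
  have hmpos : (0 : ℝ) < m := lt_of_lt_of_le one_pos hm1
  have hMpos : (0 : ℝ) < M := lt_of_lt_of_le one_pos hM1
  have hcpos : (0 : ℝ) < 1 + ‖c‖ := by linarith
  have hu1 : gpUseq c (n + 1) = Real.log M := by
    rw [gpUseq, hiter]
  have hu0 : gpUseq c n = Real.log m := rfl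
  have hlog2 : Real.log (m ^ 2) = 2 * Real.log m := by
    rw [Real.log_pow]; norm_num
  rw [abs_le]
  constructor
  · have := Real.log_le_log (by positivity) hlow
    rw [Real.log_mul (ne_of_gt hcpos) (ne_of_gt hMpos), hlog2] at this
    rw [hu1, hu0]; linarith
  · have := Real.log_le_log (by positivity) hup
    rw [Real.log_mul (ne_of_gt hcpos) (by positivity), hlog2] at this
    rw [hu1, hu0]; linarith

private lemma gpBseq_conv (c : ℂ) :
    ∃ L : ℝ, Tendsto (gpBseq c) atTop (nhds L) := by
  apply cauchySeq_tendsto_of_complete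
  apply cauchySeq_of_le_geometric (1 / 2) (Real.log (1 + ‖c‖) / 2) (by norm_num)
  intro n
  have h := gpUseq_succ_bound c n
  have hkey : gpBseq c n - gpBseq c (n + 1) =
      ((2 : ℝ) ^ (n + 1))⁻¹ * (2 * gpUseq c n - gpUseq c (n + 1)) := by
    rw [gpBseq, gpBseq, pow_succ, mul_inv]
    ring
  rw [Real.dist_eq, hkey, abs_mul, abs_of_pos (show (0:ℝ) < ((2:ℝ)^(n+1))⁻¹ by positivity),
    abs_sub_comm]
  calc ((2 : ℝ) ^ (n + 1))⁻¹ * |gpUseq c (n + 1) - 2 * gpUseq c n|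
      ≤ ((2 : ℝ) ^ (n + 1))⁻¹ * Real.log (1 + ‖c‖) :=
        mul_le_mul_of_nonneg_left h (by positivity)
    _ = Real.log (1 + ‖c‖) / 2 * (1 / 2) ^ n := by
        rw [div_pow, one_pow, pow_succ, mul_inv, div_eq_mul_inv, div_eq_mul_inv]
        ring

private lemma gp_escape (c : ℂ) (hc : 5 ≤ ‖c‖) (n : ℕ) (hn : 1 ≤ n) :
    5 ≤ ‖(fun w : ℂ => w ^ 2 + c)^[n] 0‖ ∧
    ‖c‖ ≤ ‖(fun w : ℂ => w ^ 2 + c)^[n] 0‖ ∧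
    2 ^ n * Real.log 2 + Real.log (5 / 4) ≤
      Real.log (‖(fun w : ℂ => w ^ 2 + c)^[n] 0‖) := by
  induction n with
  | zero => omega
  | succ k ih =>
    rcases Nat.eq_or_lt_of_le hn with h1 | h1
    · -- k+1 = 1, base case
      have hk : k = 0 := by omega
      subst hk
      have hz1 : (fun w : ℂ => w ^ 2 + c)^[0 + 1] 0 = c := by
        norm_num [Function.iterate_succ_apply']
      rw [hz1]
      refine ⟨hc, le_refl _, ?_⟩
      have h54 : Real.log (5 / 4) = Real.log 5 - Real.log 4 := by
        rw [Real.log_div (by norm_num) (by norm_num)]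
      have h4 : Real.log 4 = 2 * Real.log 2 := by
        rw [show (4 : ℝ) = 2 ^ 2 by norm_num, Real.log_pow]; norm_num
      have h5 : Real.log 5 ≤ Real.log (‖c‖) :=
        Real.log_le_log (by norm_num) hc
      rw [pow_one]
      linarith
    · have hk1 : 1 ≤ k := by omega
      obtain ⟨h5, hcle, hlog⟩ := ih hk1
      set z : ℂ := (fun w : ℂ => w ^ 2 + c)^[k] 0 with hz
      set a : ℝ := ‖z‖ with ha
      have hiter : (fun w : ℂ => w ^ 2 + c)^[k + 1] 0 = z ^ 2 + c := by
        rw [Function.iterate_succ_apply']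
      rw [hiter]
      have hrev := gp_rev_triangle z c
      rw [← ha] at hrev
      have hkey : 4 / 5 * a ^ 2 ≤ ‖z ^ 2 + c‖ := by
        nlinarith
      refine ⟨by nlinarith, by nlinarith, ?_⟩
      have hpos : (0 : ℝ) < 4 / 5 * a ^ 2 := by nlinarith
      have hlogle : Real.log (4 / 5 * a ^ 2) ≤ Real.log (‖z ^ 2 + c‖) :=
        Real.log_le_log hpos hkey
      have hexp : Real.log (4 / 5 * a ^ 2) = Real.log (4 / 5) + 2 * Real.log a := by
        rw [Real.log_mul (by norm_num) (by positivity), Real.log_pow]; norm_num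
      have h45 : Real.log (4 / 5) = -Real.log (5 / 4) := by
        rw [show (4:ℝ)/5 = ((5:ℝ)/4)⁻¹ by norm_num, Real.log_inv]
      rw [pow_succ]
      rw [hexp, h45] at hlogle
      nlinarith [Real.log_pos (by norm_num : (1:ℝ) < 5/4)]

private lemma gpBseq_pos_limit (c : ℂ) (hc : 5 ≤ ‖c‖) {L : ℝ}
    (hL : Tendsto (gpBseq c) atTop (nhds L)) : Real.log 2 ≤ L := by
  apply ge_of_tendsto hL
  filter_upwards [eventually_ge_atTop 1] with n hn
  obtain ⟨h5, _, hlog⟩ := gp_escape c hc n hn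
  have hmax : max (‖(fun w : ℂ => w ^ 2 + c)^[n] 0‖) 1 =
      ‖(fun w : ℂ => w ^ 2 + c)^[n] 0‖ := max_eq_left (by linarith)
  have hu : gpUseq c n = Real.log (‖(fun w : ℂ => w ^ 2 + c)^[n] 0‖) := by
    rw [gpUseq, hmax]
  have hpow : (0 : ℝ) < 2 ^ n := by positivity
  have hL54 : (0:ℝ) ≤ Real.log (5/4) := (Real.log_pos (by norm_num)).le
  rw [gpBseq, hu]
  have hge : 2 ^ n * Real.log 2 ≤
      Real.log (‖(fun w : ℂ => w ^ 2 + c)^[n] 0‖) := by linarith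
  calc Real.log 2 = ((2:ℝ) ^ n)⁻¹ * (2 ^ n * Real.log 2) := by
        rw [← mul_assoc, inv_mul_cancel₀ (ne_of_gt hpow), one_mul]
    _ ≤ ((2:ℝ) ^ n)⁻¹ * Real.log (‖(fun w : ℂ => w ^ 2 + c)^[n] 0‖) :=
        mul_le_mul_of_nonneg_left hge (by positivity)

theorem green_potential_positive (s : ℂ) :
    ∃ L : ℝ, 0 < L ∧
      Tendsto (fun n : ℕ =>
          ((2 : ℝ) ^ n)⁻¹ * Real.log
            (max (max ‖(fun w : ℂ => w ^ 2 + s)^[n] 0‖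
                      ‖(fun w : ℂ => w ^ 2 + (s + 10))^[n] 0‖) 1))
        atTop (nhds L) := by
  obtain ⟨L1, hL1⟩ := gpBseq_conv s
  obtain ⟨L2, hL2⟩ := gpBseq_conv (s + 10)
  have heq : ∀ n : ℕ,
      max (gpBseq s n) (gpBseq (s + 10) n) =
      ((2 : ℝ) ^ n)⁻¹ * Real.log
        (max (max (‖(fun w : ℂ => w ^ 2 + s)^[n] 0‖)
                  (‖(fun w : ℂ => w ^ 2 + (s + 10))^[n] 0‖)) 1) := by
    intro n
    set A := ‖(fun w : ℂ => w ^ 2 + s)^[n] 0‖ with hA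
    set B := ‖(fun w : ℂ => w ^ 2 + (s + 10))^[n] 0‖ with hB
    have hsplit : max (max A B) 1 = max (max A 1) (max B 1) := by
      rw [max_max_max_comm, max_self]
    have hlogmax : Real.log (max (max A 1) (max B 1)) =
        max (Real.log (max A 1)) (Real.log (max B 1)) := by
      rcases le_total (max A 1) (max B 1) with h | h
      · rw [max_eq_right h,
          max_eq_right (Real.log_le_log (lt_of_lt_of_le one_pos (le_max_right _ _)) h)]
      · rw [max_eq_left h,
          max_eq_left (Real.log_le_log (lt_of_lt_of_le one_pos (le_max_right _ _)) h)]
    rw [hsplit, hlogmax, gpBseq, gpBseq, gpUseq, gpUseq]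
    exact (mul_max_of_nonneg _ _ (by positivity)).symm
  have hT : Tendsto (fun n => max (gpBseq s n) (gpBseq (s + 10) n)) atTop
      (nhds (max L1 L2)) := hL1.max hL2
  refine ⟨max L1 L2, ?_, ?_⟩
  · have hlog2 : (0 : ℝ) < Real.log 2 := Real.log_pos (by norm_num)
    rcases le_or_gt 5 (‖s‖) with h | h
    · have := gpBseq_pos_limit s h hL1
      exact lt_of_lt_of_le hlog2 (this.trans (le_max_left _ _))
    · have h10 : ‖(10 : ℂ)‖ = 10 := by norm_num
      have htri : ‖(10 : ℂ)‖ - ‖s‖ ≤ ‖s + 10‖ := by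
        have h := norm_add_le (s + 10) (-s)
        rw [show s + 10 + -s = (10 : ℂ) by ring] at h
        have hneg : ‖-s‖ = ‖s‖ := norm_neg _
        linarith [hneg ▸ h]
      have h5 : 5 ≤ ‖s + 10‖ := by rw [h10] at htri; linarith
      have := gpBseq_pos_limit (s + 10) h5 hL2
      exact lt_of_lt_of_le hlog2 (this.trans (le_max_right _ _))
  · exact hT.congr heq
end
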